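/- arXiv:1707.08788 — 2 statements merged into one kernel-verified Lean document; each statement's English description precedes it below -/
import Mathlib

section
/- Let μ be a Borel probability measure on (0,∞) with ∫₀^∞ v^{-3/2} μ(dv) < ∞, let φ(x) = ∫₀^∞ ρ_v(x) μ(dv), g(x) = φ'(x)/φ(x), and define h(x) = (d²/dx²) log φ(x) − (1/x)(d/dx) log φ(x) for x ≠ 0. Then for every x ≠ 0, h(x) = ∫₀^∞ (x/v + g(x))² F(dv|x). -/
open MeasureTheory
open scoped ENNReal

set_option linter.unusedSectionVars false

/-- The density `ρ_v(x) = (2πv)^{-1/2} exp(−x²/(2v))` of the centered Gaussian law `N(0,v)`. -/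
noncomputable def gaussDens (v x : ℝ) : ℝ :=
  Real.exp (-(x ^ 2) / (2 * v)) / Real.sqrt (2 * Real.pi * v)

section Aux
variable {v x : ℝ}

lemma gaussDens_nonneg (v x : ℝ) : 0 ≤ gaussDens v x :=
  div_nonneg (Real.exp_pos _).le (Real.sqrt_nonneg _)

lemma gaussDens_pos (hv : 0 < v) (x : ℝ) : 0 < gaussDens v x :=
  div_pos (Real.exp_pos _) (Real.sqrt_pos.2 (by positivity))

lemma gaussDens_le (hv : 0 < v) (x : ℝ) :
    gaussDens v x ≤ Real.exp (-(x ^ 2) / (2 * v)) * v ^ (-(1/2) : ℝ) := by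
  have h0 : (0:ℝ) < Real.sqrt v := Real.sqrt_pos.2 hv
  have h1 : Real.sqrt v ≤ Real.sqrt (2 * Real.pi * v) :=
    Real.sqrt_le_sqrt (by nlinarith [Real.pi_gt_three])
  have h2 : gaussDens v x ≤ Real.exp (-(x ^ 2) / (2 * v)) / Real.sqrt v := by
    rw [gaussDens]; gcongr
  calc gaussDens v x ≤ _ := h2
    _ = _ := by rw [Real.sqrt_eq_rpow, Real.rpow_neg hv.le, div_eq_mul_inv]

lemma rpow_half_mul (hv : 0 < v) : v⁻¹ * v ^ (-(1/2) : ℝ) = v ^ (-(3/2) : ℝ) := by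
  rw [← Real.rpow_neg_one v, ← Real.rpow_add hv]; norm_num

lemma gaussDens_le' (hv : 0 < v) (x : ℝ) : gaussDens v x ≤ v ^ (-(1/2) : ℝ) := by
  refine (gaussDens_le hv x).trans ?_
  have : Real.exp (-(x ^ 2) / (2 * v)) ≤ 1 :=
    Real.exp_le_one_iff.2 (div_nonpos_iff.2 (Or.inr ⟨by nlinarith [sq_nonneg x], by positivity⟩))
  nlinarith [Real.rpow_nonneg hv.le (-(1/2) : ℝ)]

lemma norm_bound1 (hv : 0 < v) (x : ℝ) : ‖gaussDens v x‖ ≤ 1 + v ^ (-(3/2) : ℝ) := by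
  rw [Real.norm_of_nonneg (gaussDens_nonneg v x)]
  refine (gaussDens_le' hv x).trans ?_
  rcases le_total 1 v with h | h
  · have : v ^ (-(1/2) : ℝ) ≤ v ^ (0 : ℝ) :=
      Real.rpow_le_rpow_of_exponent_le h (by norm_num)
    have h2 : (0:ℝ) ≤ v ^ (-(3/2) : ℝ) := Real.rpow_nonneg hv.le _
    simp only [Real.rpow_zero] at this; linarith
  · have : v ^ (-(1/2) : ℝ) ≤ v ^ (-(3/2) : ℝ) :=
      Real.rpow_le_rpow_of_exponent_ge hv h (by norm_num)
    linarith

lemma norm_bound2 (hv : 0 < v) (x : ℝ) :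
    ‖-(x / v) * gaussDens v x‖ ≤ |x| * v ^ (-(3/2) : ℝ) := by
  rw [norm_mul, norm_neg, Real.norm_of_nonneg (gaussDens_nonneg v x)]
  have h1 : ‖x / v‖ = |x| * v⁻¹ := by
    rw [Real.norm_eq_abs, abs_div, abs_of_pos hv, div_eq_mul_inv]
  rw [h1]
  have := gaussDens_le' hv x
  have hx : (0:ℝ) ≤ |x| * v⁻¹ := by positivity
  calc |x| * v⁻¹ * gaussDens v x ≤ |x| * v⁻¹ * v ^ (-(1/2):ℝ) :=
        mul_le_mul_of_nonneg_left this hx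
    _ = |x| * (v⁻¹ * v ^ (-(1/2):ℝ)) := by ring
    _ = |x| * v ^ (-(3/2):ℝ) := by rw [rpow_half_mul hv]

lemma exp_factor (hv : 0 < v) (x : ℝ) :
    x ^ 2 / v ^ 2 * Real.exp (-(x ^ 2) / (2 * v)) ≤ 2 / v := by
  set t : ℝ := x ^ 2 / (2 * v) with ht
  have ht0 : 0 ≤ t := by positivity
  have h1 : t ≤ Real.exp t := by linarith [Real.add_one_le_exp t]
  have h2 : -(x ^ 2) / (2 * v) = -t := by rw [ht]; ring
  rw [h2, Real.exp_neg]
  have hexp : (0:ℝ) < Real.exp t := Real.exp_pos t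
  have h3 : x ^ 2 / v ^ 2 = 2 / v * t := by rw [ht]; field_simp
  rw [h3]
  have h4 : t * (Real.exp t)⁻¹ ≤ 1 := by
    rw [← div_eq_mul_inv, div_le_one hexp]; exact h1
  have h5 : (0:ℝ) ≤ 2 / v := by positivity
  calc 2 / v * t * (Real.exp t)⁻¹ = 2 / v * (t * (Real.exp t)⁻¹) := by ring
    _ ≤ 2 / v * 1 := mul_le_mul_of_nonneg_left h4 h5
    _ = 2 / v := mul_one _

lemma norm_bound3 (hv : 0 < v) (x : ℝ) :
    ‖(x ^ 2 / v ^ 2 - 1 / v) * gaussDens v x‖ ≤ 3 * v ^ (-(3/2) : ℝ) := by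
  rw [norm_mul, Real.norm_of_nonneg (gaussDens_nonneg v x), Real.norm_eq_abs]
  have habs : |x ^ 2 / v ^ 2 - 1 / v| ≤ x ^ 2 / v ^ 2 + 1 / v := by
    refine (abs_sub _ _).trans ?_
    rw [abs_of_nonneg (by positivity : (0:ℝ) ≤ x ^ 2 / v ^ 2),
        abs_of_nonneg (by positivity : (0:ℝ) ≤ 1 / v)]
  have hρ := gaussDens_nonneg v x
  have step : (x ^ 2 / v ^ 2 + 1 / v) * gaussDens v x ≤ 3 * v ^ (-(3/2) : ℝ) := by
    have hA : x ^ 2 / v ^ 2 * gaussDens v x ≤ 2 * v ^ (-(3/2) : ℝ) := by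
      have h1 : x ^ 2 / v ^ 2 * gaussDens v x ≤
          (x ^ 2 / v ^ 2 * Real.exp (-(x ^ 2) / (2 * v))) * v ^ (-(1/2) : ℝ) := by
        have := gaussDens_le hv x
        calc x ^ 2 / v ^ 2 * gaussDens v x
            ≤ x ^ 2 / v ^ 2 * (Real.exp (-(x ^ 2) / (2 * v)) * v ^ (-(1/2) : ℝ)) :=
              mul_le_mul_of_nonneg_left this (by positivity)
          _ = _ := by ring
      refine h1.trans ?_
      have h2 := exp_factor hv x
      have h3 : (0:ℝ) ≤ v ^ (-(1/2) : ℝ) := Real.rpow_nonneg hv.le _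
      calc (x ^ 2 / v ^ 2 * Real.exp (-(x ^ 2) / (2 * v))) * v ^ (-(1/2) : ℝ)
          ≤ (2 / v) * v ^ (-(1/2) : ℝ) := mul_le_mul_of_nonneg_right h2 h3
        _ = 2 * (v⁻¹ * v ^ (-(1/2) : ℝ)) := by ring
        _ = 2 * v ^ (-(3/2) : ℝ) := by rw [rpow_half_mul hv]
    have hB : 1 / v * gaussDens v x ≤ v ^ (-(3/2) : ℝ) := by
      have := gaussDens_le' hv x
      calc 1 / v * gaussDens v x ≤ 1 / v * v ^ (-(1/2) : ℝ) :=
            mul_le_mul_of_nonneg_left this (by positivity)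
        _ = v⁻¹ * v ^ (-(1/2) : ℝ) := by rw [one_div]
        _ = v ^ (-(3/2) : ℝ) := rpow_half_mul hv
    nlinarith
  calc |x ^ 2 / v ^ 2 - 1 / v| * gaussDens v x
      ≤ (x ^ 2 / v ^ 2 + 1 / v) * gaussDens v x := mul_le_mul_of_nonneg_right habs hρ
    _ ≤ _ := step

lemma hasDerivAt_gauss (hv : 0 < v) (x : ℝ) :
    HasDerivAt (fun y => gaussDens v y) (-(x / v) * gaussDens v x) x := by
  have h1 : HasDerivAt (fun y : ℝ => -(y ^ 2) / (2 * v)) (-(x / v)) x := by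
    have := ((hasDerivAt_pow 2 x).neg).div_const (2 * v)
    refine this.congr_deriv ?_
    norm_num; field_simp
  have h2 := (h1.exp).div_const (Real.sqrt (2 * Real.pi * v))
  refine h2.congr_deriv ?_
  unfold gaussDens; ring

lemma hasDerivAt_gauss' (hv : 0 < v) (x : ℝ) :
    HasDerivAt (fun y => -(y / v) * gaussDens v y)
      ((x ^ 2 / v ^ 2 - 1 / v) * gaussDens v x) x := by
  have h1 : HasDerivAt (fun y : ℝ => -(y / v)) (-(1 / v)) x := by
    have := ((hasDerivAt_id x).div_const v).neg
    exact this
  have h2 := h1.mul (hasDerivAt_gauss hv x)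
  refine h2.congr_deriv ?_
  ring

end Aux


/-- The normal variance-mixture function `φ(x) = ∫₀^∞ ρ_v(x) μ(dv)`. -/
noncomputable def mixDens (μ : Measure ℝ) (x : ℝ) : ℝ :=
  ∫ v, gaussDens v x ∂μ

noncomputable def D1 (μ : Measure ℝ) (x : ℝ) : ℝ :=
  ∫ v, -(x / v) * gaussDens v x ∂μ

noncomputable def D2 (μ : Measure ℝ) (x : ℝ) : ℝ :=
  ∫ v, (x ^ 2 / v ^ 2 - 1 / v) * gaussDens v x ∂μ

section Meas

lemma meas_gauss (x : ℝ) : Measurable fun v => gaussDens v x := by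
  unfold gaussDens; fun_prop

lemma meas_gauss1 (x : ℝ) : Measurable fun v => -(x / v) * gaussDens v x := by
  have := meas_gauss x
  fun_prop

lemma meas_gauss2 (x : ℝ) : Measurable fun v => (x ^ 2 / v ^ 2 - 1 / v) * gaussDens v x := by
  have := meas_gauss x
  fun_prop

end Meas

section Int

variable {μ : Measure ℝ} [IsProbabilityMeasure μ]

omit [IsProbabilityMeasure μ] in
lemma ae_pos (hμ : μ (Set.Iic 0) = 0) : ∀ᵐ v ∂μ, 0 < v := by
  rw [ae_iff]
  simp only [not_lt]
  exact hμ

lemma integrable_w (hμ : μ (Set.Iic 0) = 0)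
    (hmom : ∫⁻ v, ENNReal.ofReal (v ^ (-(3 / 2) : ℝ)) ∂μ < ⊤) :
    Integrable (fun v : ℝ => v ^ (-(3/2) : ℝ)) μ := by
  have hm : Measurable fun v : ℝ => v ^ (-(3/2) : ℝ) := by fun_prop
  refine ⟨hm.aestronglyMeasurable, ?_⟩
  rw [hasFiniteIntegral_iff_ofReal
    ((ae_pos hμ).mono fun v hv => Real.rpow_nonneg hv.le _)]
  exact hmom

lemma integrable_gauss (hμ : μ (Set.Iic 0) = 0)
    (hmom : ∫⁻ v, ENNReal.ofReal (v ^ (-(3 / 2) : ℝ)) ∂μ < ⊤) (x : ℝ) :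
    Integrable (fun v => gaussDens v x) μ := by
  refine Integrable.mono ((integrable_const (1:ℝ)).add (integrable_w hμ hmom))
    (meas_gauss x).aestronglyMeasurable ?_
  refine (ae_pos hμ).mono fun v hv => ?_
  have h2 : (0:ℝ) ≤ 1 + v ^ (-(3/2) : ℝ) := by positivity
  simpa [Real.norm_of_nonneg h2] using norm_bound1 hv x

lemma mixDens_pos (hμ : μ (Set.Iic 0) = 0)
    (hmom : ∫⁻ v, ENNReal.ofReal (v ^ (-(3 / 2) : ℝ)) ∂μ < ⊤) (x : ℝ) :
    0 < mixDens μ x := by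
  rw [mixDens]
  rw [integral_pos_iff_support_of_nonneg_ae
    (Filter.Eventually.of_forall fun v => gaussDens_nonneg v x) (integrable_gauss hμ hmom x)]
  have hs : ∀ᵐ v ∂μ, v ∈ Function.support fun v => gaussDens v x :=
    (ae_pos hμ).mono fun v hv => (gaussDens_pos hv x).ne'
  by_contra h
  push_neg at h
  have h0 : μ (Function.support fun v => gaussDens v x) = 0 := le_antisymm h zero_le
  have := measure_union_le (μ := μ) (Function.support fun v => gaussDens v x)
    (Function.support fun v => gaussDens v x)ᶜ
  rw [Set.union_compl_self, h0, zero_add, measure_univ] at this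
  have hc : μ (Function.support fun v => gaussDens v x)ᶜ = 0 := hs
  rw [hc] at this
  simp at this

lemma hasDerivAt_mixDens (hμ : μ (Set.Iic 0) = 0)
    (hmom : ∫⁻ v, ENNReal.ofReal (v ^ (-(3 / 2) : ℝ)) ∂μ < ⊤) (x₀ : ℝ) :
    Integrable (fun v => -(x₀ / v) * gaussDens v x₀) μ ∧
      HasDerivAt (mixDens μ) (D1 μ x₀) x₀ := by
  have h := hasDerivAt_integral_of_dominated_loc_of_deriv_le
    (F := fun x v => gaussDens v x) (F' := fun x v => -(x / v) * gaussDens v x)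
    (x₀ := x₀) (s := Metric.ball x₀ 1)
    (bound := fun v => (|x₀| + 1) * v ^ (-(3/2) : ℝ)) (Metric.ball_mem_nhds x₀ one_pos)
    (Filter.Eventually.of_forall fun x => (meas_gauss x).aestronglyMeasurable)
    (integrable_gauss hμ hmom x₀)
    ((meas_gauss1 x₀).aestronglyMeasurable)
    ?_ ((integrable_w hμ hmom).const_mul _) ?_
  · exact h
  · refine (ae_pos hμ).mono fun v hv x hx => ?_
    refine (norm_bound2 hv x).trans ?_
    have hxb : |x| ≤ |x₀| + 1 := by
      have := Metric.mem_ball.1 hx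
      rw [Real.dist_eq] at this
      calc |x| = |x₀ + (x - x₀)| := by ring_nf
        _ ≤ |x₀| + |x - x₀| := abs_add_le _ _
        _ ≤ |x₀| + 1 := by linarith
    exact mul_le_mul_of_nonneg_right hxb (Real.rpow_nonneg hv.le _)
  · exact (ae_pos hμ).mono fun v hv x _ => hasDerivAt_gauss hv x

lemma hasDerivAt_D1 (hμ : μ (Set.Iic 0) = 0)
    (hmom : ∫⁻ v, ENNReal.ofReal (v ^ (-(3 / 2) : ℝ)) ∂μ < ⊤) (x₀ : ℝ) :
    Integrable (fun v => (x₀ ^ 2 / v ^ 2 - 1 / v) * gaussDens v x₀) μ ∧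
      HasDerivAt (D1 μ) (D2 μ x₀) x₀ := by
  have h := hasDerivAt_integral_of_dominated_loc_of_deriv_le
    (F := fun x v => -(x / v) * gaussDens v x)
    (F' := fun x v => (x ^ 2 / v ^ 2 - 1 / v) * gaussDens v x)
    (x₀ := x₀) (s := Metric.ball x₀ 1)
    (bound := fun v => 3 * v ^ (-(3/2) : ℝ)) (Metric.ball_mem_nhds x₀ one_pos)
    (Filter.Eventually.of_forall fun x => (meas_gauss1 x).aestronglyMeasurable)
    (hasDerivAt_mixDens hμ hmom x₀).1
    ((meas_gauss2 x₀).aestronglyMeasurable)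
    ((ae_pos hμ).mono fun v hv x _ => norm_bound3 hv x)
    ((integrable_w hμ hmom).const_mul _)
    ((ae_pos hμ).mono fun v hv x _ => hasDerivAt_gauss' hv x)
  exact h

end Int


/-- The conditional mixing measure `F(dv|x) = ρ_v(x) μ(dv) / φ(x)`. -/
noncomputable def condMeasure (μ : Measure ℝ) (x : ℝ) : Measure ℝ :=
  (ENNReal.ofReal (mixDens μ x))⁻¹ • μ.withDensity (fun v => ENNReal.ofReal (gaussDens v x))

/-- `g(x) = φ'(x)/φ(x)`. -/
noncomputable def gFun (μ : Measure ℝ) (x : ℝ) : ℝ :=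
  deriv (mixDens μ) x / mixDens μ x

/-- `h(x) = (log φ)''(x) − (1/x)(log φ)'(x)`. -/
noncomputable def hFun (μ : Measure ℝ) (x : ℝ) : ℝ :=
  deriv (deriv (fun y => Real.log (mixDens μ y))) x
    - (1 / x) * deriv (fun y => Real.log (mixDens μ y)) x

/-- If `μ` is a Borel probability measure on `(0,∞)` with
`∫ v^{-3/2} μ(dv) < ∞`, then for every `x ≠ 0`,
`h(x) = ∫ (x/v + g(x))² F(dv|x)`. -/
theorem hFun_identity (μ : Measure ℝ) [IsProbabilityMeasure μ]
    (hμ : μ (Set.Iic 0) = 0)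
    (hmom : ∫⁻ v, ENNReal.ofReal (v ^ (-(3 / 2) : ℝ)) ∂μ < ⊤) :
    ∀ x : ℝ, x ≠ 0 →
      hFun μ x = ∫ v, (x / v + gFun μ x) ^ 2 ∂(condMeasure μ x) := by
  intro x hx
  have hφ := mixDens_pos hμ hmom x
  have hD1 := (hasDerivAt_mixDens hμ hmom x).2
  have hI1 := (hasDerivAt_mixDens hμ hmom x).1
  have hD2 := (hasDerivAt_D1 hμ hmom x).2
  have hIA := (hasDerivAt_D1 hμ hmom x).1
  have hIρ := integrable_gauss hμ hmom x
  have hIC : Integrable (fun v => x / v * gaussDens v x) μ := by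
    exact hI1.neg.congr (Filter.Eventually.of_forall fun v => by
      show -(-(x / v) * gaussDens v x) = _
      ring)
  have hg : gFun μ x = D1 μ x / mixDens μ x := by rw [gFun, hD1.deriv]
  have hφpos : ∀ y, 0 < mixDens μ y := mixDens_pos hμ hmom
  have hlog : deriv (fun y => Real.log (mixDens μ y)) = fun y => D1 μ y / mixDens μ y :=
    funext fun y => (((hasDerivAt_mixDens hμ hmom y).2).log (hφpos y).ne').deriv
  have hd2' : HasDerivAt (fun y => D1 μ y / mixDens μ y)
      ((D2 μ x * mixDens μ x - D1 μ x * D1 μ x) / mixDens μ x ^ 2) x :=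
    hD2.div hD1 hφ.ne'
  have hL : hFun μ x = (D2 μ x * mixDens μ x - D1 μ x * D1 μ x) / mixDens μ x ^ 2
      - (1 / x) * (D1 μ x / mixDens μ x) := by
    rw [hFun, hlog, hd2'.deriv]
  have hC : ∫ v, x / v * gaussDens v x ∂μ = -D1 μ x := by
    rw [D1, ← integral_neg]
    congr 1
    funext v
    ring
  have hmeasn : Measurable fun v => Real.toNNReal (gaussDens v x) :=
    measurable_real_toNNReal.comp (meas_gauss x)
  have hwd : (μ.withDensity fun v => ENNReal.ofReal (gaussDens v x))
      = μ.withDensity fun v => (↑(Real.toNNReal (gaussDens v x)) : ℝ≥0∞) := rfl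
  rw [condMeasure, integral_smul_measure, hwd, integral_withDensity_eq_integral_smul hmeasn]
  have hsmul : (fun v => Real.toNNReal (gaussDens v x) • (x / v + gFun μ x) ^ 2)
      = fun v => gaussDens v x * (x / v + gFun μ x) ^ 2 :=
    funext fun v => by rw [NNReal.smul_def, Real.coe_toNNReal _ (gaussDens_nonneg v x), smul_eq_mul]
  rw [hsmul]
  have htr : (ENNReal.ofReal (mixDens μ x))⁻¹.toReal = (mixDens μ x)⁻¹ := by
    rw [ENNReal.toReal_inv, ENNReal.toReal_ofReal hφ.le]
  have e1 : Integrable (fun v => x⁻¹ * (x / v * gaussDens v x)) μ := hIC.const_mul _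
  have e2 : Integrable (fun v => (2 * gFun μ x) * (x / v * gaussDens v x)) μ := hIC.const_mul _
  have e3 : Integrable (fun v => gFun μ x ^ 2 * gaussDens v x) μ := hIρ.const_mul _
  have hsplit : ∫ v, gaussDens v x * (x / v + gFun μ x) ^ 2 ∂μ
      = ∫ v, ((x ^ 2 / v ^ 2 - 1 / v) * gaussDens v x
          + (x⁻¹ * (x / v * gaussDens v x)
          + ((2 * gFun μ x) * (x / v * gaussDens v x) + gFun μ x ^ 2 * gaussDens v x))) ∂μ := by
    refine integral_congr_ae ((ae_pos hμ).mono fun v hv => ?_)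
    field_simp
    ring
  have e23 : Integrable (fun v => 2 * gFun μ x * (x / v * gaussDens v x)
      + gFun μ x ^ 2 * gaussDens v x) μ := e2.add e3
  have e123 : Integrable (fun v => x⁻¹ * (x / v * gaussDens v x)
      + (2 * gFun μ x * (x / v * gaussDens v x) + gFun μ x ^ 2 * gaussDens v x)) μ := e1.add e23
  rw [hsplit, integral_add hIA e123, integral_add e1 e23, integral_add e2 e3,
      integral_const_mul, integral_const_mul, integral_const_mul, hC]
  have hφint : ∫ v, gaussDens v x ∂μ = mixDens μ x := rfl
  have hD2eq : ∫ v, (x ^ 2 / v ^ 2 - 1 / v) * gaussDens v x ∂μ = D2 μ x := rfl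
  rw [hφint, hD2eq, hL, hg, htr, smul_eq_mul]
  field_simp
  ring
end

section
/- Let β ∈ (0,2), k ≥ 0, and let μ be a Borel probability measure on (0,∞) with a density f satisfying f(v) ≤ C₁ v^{−β/2−1} for all v > 0, for some constant C₁ > 0. Let φ(x) = ∫₀^∞ ρ_v(x) μ(dv) and suppose there is c₁ > 0 with φ(x) ≥ c₁ |x|^{−(β+1)} for all |x| ≥ 1. Then for all |x| ≥ 1, ∫₀^∞ v^{−k} F(dv|x) ≤ K |x|^{−2k}, where K = C₁ c₁^{−1} (2π)^{−1/2} 2^{(2k+β+1)/2} Γ((2k+β+1)/2). -/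
open MeasureTheory
open scoped ENNReal

section Aux

lemma keyA {s : ℝ} : ∀ x : ℝ, x ∈ Set.Ioi (0:ℝ) →
    (|(-1:ℝ)| * x ^ ((-1:ℝ) - 1)) • (Real.exp (-(x ^ (-1:ℝ))) * (x ^ (-1:ℝ)) ^ (s - 1))
      = Real.exp (-x⁻¹) * x ^ (-s - 1) := by
  intro x hx
  have hx0 : (0:ℝ) < x := hx
  rw [Real.rpow_neg_one, smul_eq_mul, Real.inv_rpow hx0.le, ← Real.rpow_neg hx0.le,
    show |(-1:ℝ)| = 1 by norm_num, one_mul, mul_comm (Real.exp (-x⁻¹)), ← mul_assoc,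
    ← Real.rpow_add hx0, show (-1:ℝ) - 1 + -(s-1) = -s - 1 by ring, mul_comm]

lemma intA {s : ℝ} (hs : 0 < s) :
    IntegrableOn (fun v : ℝ => Real.exp (-v⁻¹) * v ^ (-s - 1)) (Set.Ioi 0) := by
  have h := (integrableOn_Ioi_comp_rpow_iff
      (fun t : ℝ => Real.exp (-t) * t ^ (s - 1)) (p := -1) (by norm_num)).2
      (Real.GammaIntegral_convergent hs)
  exact h.congr_fun (fun x hx => keyA (s := s) x hx) measurableSet_Ioi

lemma eqA {s : ℝ} (hs : 0 < s) :
    ∫ v in Set.Ioi (0:ℝ), Real.exp (-v⁻¹) * v ^ (-s - 1) = Real.Gamma s := by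
  rw [Real.Gamma_eq_integral hs,
    ← integral_comp_rpow_Ioi (fun t : ℝ => Real.exp (-t) * t ^ (s - 1)) (p := -1) (by norm_num)]
  exact (setIntegral_congr_fun measurableSet_Ioi
    (fun x hx => (keyA (s := s) x hx))).symm

lemma keyB {a s : ℝ} (ha : 0 < a) : ∀ x : ℝ, x ∈ Set.Ioi (0:ℝ) →
    Real.exp (-(a / (a * x))) * (a * x) ^ (-s - 1)
      = a ^ (-s - 1) * (Real.exp (-x⁻¹) * x ^ (-s - 1)) := by
  intro x hx
  have hx0 : (0:ℝ) < x := hx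
  rw [Real.mul_rpow ha.le hx0.le, show a / (a * x) = x⁻¹ by field_simp]
  ring

lemma intB {a s : ℝ} (ha : 0 < a) (hs : 0 < s) :
    IntegrableOn (fun v : ℝ => Real.exp (-(a / v)) * v ^ (-s - 1)) (Set.Ioi 0) := by
  have h0 : IntegrableOn
      (fun x : ℝ => a ^ (-s - 1) * (Real.exp (-x⁻¹) * x ^ (-s - 1))) (Set.Ioi 0) :=
    (intA hs).const_mul _
  have h : IntegrableOn
      (fun x : ℝ => Real.exp (-(a / (a * x))) * (a * x) ^ (-s - 1)) (Set.Ioi 0) :=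
    h0.congr_fun (fun x hx => (keyB ha x hx).symm) measurableSet_Ioi
  have := (integrableOn_Ioi_comp_mul_left_iff
      (fun v : ℝ => Real.exp (-(a / v)) * v ^ (-s - 1)) 0 ha).1 h
  simpa using this

lemma eqB {a s : ℝ} (ha : 0 < a) (hs : 0 < s) :
    ∫ v in Set.Ioi (0:ℝ), Real.exp (-(a / v)) * v ^ (-s - 1)
      = a ^ (-s) * Real.Gamma s := by
  have h := integral_comp_mul_left_Ioi
    (fun v : ℝ => Real.exp (-(a / v)) * v ^ (-s - 1)) 0 ha
  simp only [mul_zero, smul_eq_mul] at h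
  have h2 : ∫ x in Set.Ioi (0:ℝ), Real.exp (-(a / (a * x))) * (a * x) ^ (-s - 1)
      = a ^ (-s - 1) * Real.Gamma s := by
    rw [setIntegral_congr_fun measurableSet_Ioi (fun x hx => keyB ha x hx),
      integral_const_mul, eqA hs]
  rw [h2] at h
  have hp : a * a ^ (-s - 1) = a ^ (-s) := by
    rw [mul_comm, ← Real.rpow_add_one ha.ne']; ring_nf
  have hv : ∫ v in Set.Ioi (0:ℝ), Real.exp (-(a / v)) * v ^ (-s - 1)
      = a * (a ^ (-s - 1) * Real.Gamma s) := by
    rw [h, ← mul_assoc, mul_inv_cancel₀ ha.ne', one_mul]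
  rw [hv, ← mul_assoc, hp]

lemma lintB {a s : ℝ} (ha : 0 < a) (hs : 0 < s) :
    ∫⁻ v in Set.Ioi (0:ℝ), ENNReal.ofReal (Real.exp (-(a / v)) * v ^ (-s - 1))
      = ENNReal.ofReal (a ^ (-s) * Real.Gamma s) := by
  rw [← eqB ha hs, ← ofReal_integral_eq_lintegral_ofReal (intB ha hs)]
  exact (ae_restrict_iff' measurableSet_Ioi).2 (Filter.Eventually.of_forall
    (fun v hv => by have h1 : (0:ℝ) < v := hv; positivity))

lemma keyC {β k x : ℝ} (C₁ : ℝ) {v : ℝ} (hv : 0 < v) :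
    C₁ * v ^ (-β/2 - 1) * (gaussDens v x * v ^ (-k))
      = (C₁ * (Real.sqrt (2*Real.pi))⁻¹) *
        (Real.exp (-(x^2/2 / v)) * v ^ (-((2*k+β+1)/2) - 1)) := by
  have hpow : v ^ (-((2*k+β+1)/2) - 1) = v ^ (-β/2-1) * (v ^ (-(1/2:ℝ)) * v ^ (-k)) := by
    rw [← Real.rpow_add hv, ← Real.rpow_add hv]; congr 1; ring
  rw [gaussDens, show -(x^2) / (2*v) = -(x^2/2/v) by ring,
    Real.sqrt_mul (by positivity : (0:ℝ) ≤ 2*Real.pi), Real.sqrt_eq_rpow v,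
    hpow]
  rw [div_eq_mul_inv (Real.exp _), mul_inv, ← Real.rpow_neg hv.le]
  ring

end Aux

/-- Let `β ∈ (0,2)`, `k ≥ 0`, and let `μ` be a Borel probability measure on
`(0,∞)` with density `f` satisfying `f(v) ≤ C₁ v^{−β/2−1}`. If
`φ(x) ≥ c₁ |x|^{−(β+1)}` for `|x| ≥ 1`, then for all `|x| ≥ 1`,
`∫ v^{−k} F(dv|x) ≤ K |x|^{−2k}` with
`K = C₁ c₁⁻¹ (2π)^{−1/2} 2^{(2k+β+1)/2} Γ((2k+β+1)/2)`. -/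
theorem conditional_negative_moment_bound (β k : ℝ) (hβ : β ∈ Set.Ioo (0 : ℝ) 2)
    (hk : 0 ≤ k) (f : ℝ → ℝ) (hf0 : ∀ v, 0 ≤ f v) (C₁ : ℝ) (hC₁ : 0 < C₁)
    (μ : Measure ℝ) [IsProbabilityMeasure μ]
    (hμd : μ = (volume.restrict (Set.Ioi (0 : ℝ))).withDensity
        (fun v => ENNReal.ofReal (f v)))
    (hfb : ∀ v : ℝ, 0 < v → f v ≤ C₁ * v ^ (-β / 2 - 1))
    (c₁ : ℝ) (hc₁ : 0 < c₁)
    (hφ : ∀ x : ℝ, 1 ≤ |x| → c₁ * |x| ^ (-(β + 1)) ≤ mixDens μ x) :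
    ∀ x : ℝ, 1 ≤ |x| →
      ∫⁻ v, ENNReal.ofReal (v ^ (-k)) ∂(condMeasure μ x)
        ≤ ENNReal.ofReal (C₁ * c₁⁻¹ * (Real.sqrt (2 * Real.pi))⁻¹ *
            2 ^ ((2 * k + β + 1) / 2) * Real.Gamma ((2 * k + β + 1) / 2) *
            |x| ^ (-(2 * k))) := by
  intro x hx
  obtain ⟨hβ0, hβ2⟩ := hβ
  have hx0 : (0:ℝ) < |x| := lt_of_lt_of_le one_pos hx
  have hs : 0 < (2*k+β+1)/2 := div_pos (by linarith) two_pos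
  have hxne : x ≠ 0 := by
    intro h; rw [h, abs_zero] at hx0; exact lt_irrefl 0 hx0
  have ha : 0 < x^2/2 := by positivity
  have hgk : Measurable fun v : ℝ => ENNReal.ofReal (v ^ (-k)) := by fun_prop
  have hgauss : Measurable fun v : ℝ => ENNReal.ofReal (gaussDens v x) := by
    unfold gaussDens; fun_prop
  have hD : Measurable fun v : ℝ => ENNReal.ofReal (C₁ * v ^ (-β/2 - 1)) := by fun_prop
  have hφpos : 0 < mixDens μ x := lt_of_lt_of_le (by positivity) (hφ x hx)
  have step1 : ∫⁻ v, ENNReal.ofReal (v ^ (-k)) ∂(condMeasure μ x)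
      = (ENNReal.ofReal (mixDens μ x))⁻¹ *
        ∫⁻ v, ENNReal.ofReal (gaussDens v x) * ENNReal.ofReal (v ^ (-k)) ∂μ := by
    rw [condMeasure, lintegral_smul_measure,
      lintegral_withDensity_eq_lintegral_mul μ hgauss hgk]
    rfl
  have hμle : μ ≤ (volume.restrict (Set.Ioi (0:ℝ))).withDensity
      (fun v => ENNReal.ofReal (C₁ * v ^ (-β/2 - 1))) := by
    rw [hμd]
    exact withDensity_mono ((ae_restrict_iff' measurableSet_Ioi).2
      (Filter.Eventually.of_forall fun v hv => ENNReal.ofReal_le_ofReal (hfb v hv)))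
  have step2 : ∫⁻ v, ENNReal.ofReal (gaussDens v x) * ENNReal.ofReal (v ^ (-k)) ∂μ
      ≤ ∫⁻ v, ENNReal.ofReal (gaussDens v x) * ENNReal.ofReal (v ^ (-k))
          ∂((volume.restrict (Set.Ioi (0:ℝ))).withDensity
            (fun v => ENNReal.ofReal (C₁ * v ^ (-β/2 - 1)))) :=
    lintegral_mono' hμle le_rfl
  have step3 : ∫⁻ v, ENNReal.ofReal (gaussDens v x) * ENNReal.ofReal (v ^ (-k))
        ∂((volume.restrict (Set.Ioi (0:ℝ))).withDensity
          (fun v => ENNReal.ofReal (C₁ * v ^ (-β/2 - 1))))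
      = ∫⁻ v in Set.Ioi (0:ℝ), ENNReal.ofReal (C₁ * v ^ (-β/2 - 1)) *
          (ENNReal.ofReal (gaussDens v x) * ENNReal.ofReal (v ^ (-k))) := by
    rw [lintegral_withDensity_eq_lintegral_mul _ hD (g := fun v => ENNReal.ofReal (gaussDens v x) * ENNReal.ofReal (v ^ (-k))) (hgauss.mul hgk)]
    rfl
  have step4 : ∫⁻ v in Set.Ioi (0:ℝ), ENNReal.ofReal (C₁ * v ^ (-β/2 - 1)) *
          (ENNReal.ofReal (gaussDens v x) * ENNReal.ofReal (v ^ (-k)))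
      = ENNReal.ofReal (C₁ * (Real.sqrt (2*Real.pi))⁻¹) *
        ENNReal.ofReal ((x^2/2) ^ (-((2*k+β+1)/2)) * Real.Gamma ((2*k+β+1)/2)) := by
    have hcong : ∀ v ∈ Set.Ioi (0:ℝ),
        ENNReal.ofReal (C₁ * v ^ (-β/2 - 1)) *
          (ENNReal.ofReal (gaussDens v x) * ENNReal.ofReal (v ^ (-k)))
        = ENNReal.ofReal (C₁ * (Real.sqrt (2*Real.pi))⁻¹) *
          ENNReal.ofReal (Real.exp (-(x^2/2 / v)) * v ^ (-((2*k+β+1)/2) - 1)) := by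
      intro v hv
      have hv0 : (0:ℝ) < v := hv
      have hgd : 0 ≤ gaussDens v x :=
        div_nonneg (Real.exp_pos _).le (Real.sqrt_nonneg _)
      rw [← ENNReal.ofReal_mul hgd,
        ← ENNReal.ofReal_mul (mul_nonneg hC₁.le (Real.rpow_nonneg hv0.le _)),
        keyC C₁ hv0,
        ENNReal.ofReal_mul (mul_nonneg hC₁.le (inv_nonneg.2 (Real.sqrt_nonneg _)))]
    rw [setLIntegral_congr_fun measurableSet_Ioi hcong,
      lintegral_const_mul' _ _ ENNReal.ofReal_ne_top, lintB ha hs]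
  have hinv : (ENNReal.ofReal (mixDens μ x))⁻¹
      ≤ ENNReal.ofReal (c₁⁻¹ * |x| ^ (β+1)) := by
    rw [← ENNReal.ofReal_inv_of_pos hφpos]
    apply ENNReal.ofReal_le_ofReal
    have h1 : (c₁ * |x| ^ (-(β+1)))⁻¹ = c₁⁻¹ * |x| ^ (β+1) := by
      rw [mul_inv, ← Real.rpow_neg (abs_nonneg x), neg_neg]
    rw [← h1]
    exact inv_anti₀ (by positivity) (hφ x hx)
  have hreal : c₁⁻¹ * |x| ^ (β+1) * (C₁ * (Real.sqrt (2*Real.pi))⁻¹ *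
      ((x^2/2) ^ (-((2*k+β+1)/2)) * Real.Gamma ((2*k+β+1)/2)))
      = C₁ * c₁⁻¹ * (Real.sqrt (2 * Real.pi))⁻¹ *
          2 ^ ((2 * k + β + 1) / 2) * Real.Gamma ((2 * k + β + 1) / 2) *
          |x| ^ (-(2 * k)) := by
    have e1 : (x^2/2 : ℝ) ^ (-((2*k+β+1)/2))
        = 2 ^ ((2*k+β+1)/2) * |x| ^ (-(2*((2*k+β+1)/2))) := by
      rw [Real.div_rpow (by positivity) (by norm_num : (0:ℝ) ≤ 2), ← sq_abs,
        ← Real.rpow_natCast |x| 2, ← Real.rpow_mul (abs_nonneg x),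
        Real.rpow_neg (by norm_num : (0:ℝ) ≤ 2), div_eq_mul_inv, inv_inv,
        show ((2:ℕ):ℝ) * -((2*k+β+1)/2) = -(2*((2*k+β+1)/2)) by push_cast; ring]
      ring
    rw [e1, show c₁⁻¹ * |x| ^ (β+1) * (C₁ * (Real.sqrt (2*Real.pi))⁻¹ *
        (2 ^ ((2*k+β+1)/2) * |x| ^ (-(2*((2*k+β+1)/2))) * Real.Gamma ((2*k+β+1)/2)))
      = C₁ * c₁⁻¹ * (Real.sqrt (2 * Real.pi))⁻¹ * 2 ^ ((2*k+β+1)/2) *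
        Real.Gamma ((2*k+β+1)/2) * (|x| ^ (β+1) * |x| ^ (-(2*((2*k+β+1)/2)))) by ring,
      ← Real.rpow_add hx0, show β+1 + -(2*((2*k+β+1)/2)) = -(2*k) by ring]
  calc ∫⁻ v, ENNReal.ofReal (v ^ (-k)) ∂(condMeasure μ x)
      = (ENNReal.ofReal (mixDens μ x))⁻¹ *
        ∫⁻ v, ENNReal.ofReal (gaussDens v x) * ENNReal.ofReal (v ^ (-k)) ∂μ := step1
    _ ≤ (ENNReal.ofReal (mixDens μ x))⁻¹ *
        (ENNReal.ofReal (C₁ * (Real.sqrt (2*Real.pi))⁻¹) *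
          ENNReal.ofReal ((x^2/2) ^ (-((2*k+β+1)/2)) * Real.Gamma ((2*k+β+1)/2))) :=
      mul_le_mul_right (step2.trans_eq (step3.trans step4)) _
    _ ≤ ENNReal.ofReal (c₁⁻¹ * |x| ^ (β+1)) *
        (ENNReal.ofReal (C₁ * (Real.sqrt (2*Real.pi))⁻¹) *
          ENNReal.ofReal ((x^2/2) ^ (-((2*k+β+1)/2)) * Real.Gamma ((2*k+β+1)/2))) :=
      mul_le_mul_left hinv _
    _ = ENNReal.ofReal (c₁⁻¹ * |x| ^ (β+1) * (C₁ * (Real.sqrt (2*Real.pi))⁻¹ *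
          ((x^2/2) ^ (-((2*k+β+1)/2)) * Real.Gamma ((2*k+β+1)/2)))) := by
        rw [← ENNReal.ofReal_mul (mul_nonneg hC₁.le (inv_nonneg.2 (Real.sqrt_nonneg _))),
          ← ENNReal.ofReal_mul (by positivity : (0:ℝ) ≤ c₁⁻¹ * |x| ^ (β+1))]
    _ = ENNReal.ofReal (C₁ * c₁⁻¹ * (Real.sqrt (2 * Real.pi))⁻¹ *
          2 ^ ((2 * k + β + 1) / 2) * Real.Gamma ((2 * k + β + 1) / 2) *
          |x| ^ (-(2 * k))) := by rw [hreal]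
end
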